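/- Let n ≥ 3, r = n - k with 0 < r ≤ n - 2, and α ∈ (0,1]. Suppose real numbers t_ij for i,j ∈ {1,…,k} satisfy α ≤ t_ij ≤ 1/α. If (n-1)α² - α - (n-r-2) > 0 and (n-1)α - (n-r-1) > 0, then for every i ≤ k-1: (n-1)t_ii - (Σ_{j ≤ k-1, j ≠ i} t_ij) - 1 > 0, and also (n-1) - Σ_{j=1}^{k-1} t_kj > 0. -/

import Mathlib

theorem stmt12 (n k r : ℕ) (hn : 3 ≤ n) (hr : r = n - k) (hr0 : 0 < r) (hrn : r ≤ n - 2)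
    (α : ℝ) (hα0 : 0 < α) (hα1 : α ≤ 1)
    (t : ℕ → ℕ → ℝ)
    (ht : ∀ i j, 1 ≤ i → i ≤ k → 1 ≤ j → j ≤ k → α ≤ t i j ∧ t i j ≤ 1 / α)
    (hf : ((n : ℝ) - 1) * α ^ 2 - α - ((n : ℝ) - r - 2) > 0)
    (hg : ((n : ℝ) - 1) * α - ((n : ℝ) - r - 1) > 0) :
    (∀ i, 1 ≤ i → i ≤ k - 1 →
      ((n : ℝ) - 1) * t i i - (∑ j ∈ (Finset.Icc 1 (k - 1)).erase i, t i j) - 1 > 0) ∧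
    ((n : ℝ) - 1) - (∑ j ∈ Finset.Icc 1 (k - 1), t k j) > 0 := by
  have hkn : k < n := by omega
  have hk2 : 2 ≤ k := by omega
  have hkr : (k : ℝ) = (n : ℝ) - r := by
    have : k = n - r := by omega
    rw [this]
    push_cast [Nat.cast_sub (by omega : r ≤ n)]
    ring
  have hn1 : (0:ℝ) ≤ (n:ℝ) - 1 := by
    have : (3:ℝ) ≤ (n:ℝ) := by exact_mod_cast hn
    linarith
  have hinv : α * (1 / α) = 1 := by field_simp
  constructor
  · intro i hi1 hi2
    have hik : i ≤ k := le_trans hi2 (Nat.sub_le k 1)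
    have hii : α ≤ t i i := (ht i i hi1 hik hi1 hik).1
    have hmem : i ∈ Finset.Icc 1 (k - 1) := by simp [Finset.mem_Icc]; omega
    have hcard : ((Finset.Icc 1 (k - 1)).erase i).card = k - 2 := by
      rw [Finset.card_erase_of_mem hmem, Nat.card_Icc]; omega
    have hsum : ∑ j ∈ (Finset.Icc 1 (k - 1)).erase i, t i j ≤ ((k:ℝ) - 2) * (1 / α) := by
      have hb : ∀ j ∈ (Finset.Icc 1 (k - 1)).erase i, t i j ≤ 1 / α := by
        intro j hj
        simp [Finset.mem_erase, Finset.mem_Icc] at hj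
        exact (ht i j hi1 hik hj.2.1 (by omega)).2
      have := Finset.sum_le_card_nsmul _ _ _ hb
      rw [hcard] at this
      calc ∑ j ∈ (Finset.Icc 1 (k - 1)).erase i, t i j ≤ (k - 2 : ℕ) • (1/α) := this
        _ = ((k:ℝ) - 2) * (1 / α) := by
            rw [nsmul_eq_mul, Nat.cast_sub hk2]; norm_num
    have key : (0:ℝ) < ((n:ℝ) - 1) * α - ((k:ℝ) - 2) * (1 / α) - 1 := by
      rw [hkr]
      nlinarith [hf, hα0, hinv]
    have h1 : ((n:ℝ) - 1) * α ≤ ((n:ℝ) - 1) * t i i := by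
      exact mul_le_mul_of_nonneg_left hii hn1
    linarith
  · have hsum : ∑ j ∈ Finset.Icc 1 (k - 1), t k j ≤ ((k:ℝ) - 1) * (1 / α) := by
      have hb : ∀ j ∈ Finset.Icc 1 (k - 1), t k j ≤ 1 / α := by
        intro j hj
        simp [Finset.mem_Icc] at hj
        exact (ht k j (by omega) le_rfl hj.1 (by omega)).2
      have := Finset.sum_le_card_nsmul _ _ _ hb
      rw [Nat.card_Icc] at this
      calc ∑ j ∈ Finset.Icc 1 (k - 1), t k j ≤ (k - 1 + 1 - 1 : ℕ) • (1/α) := this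
        _ = ((k:ℝ) - 1) * (1 / α) := by
            rw [nsmul_eq_mul]
            congr 1
            push_cast [Nat.cast_sub (by omega : 1 ≤ k)]
            ring
    have key : (0:ℝ) < ((n:ℝ) - 1) - ((k:ℝ) - 1) * (1 / α) := by
      rw [hkr]
      nlinarith [hg, hα0, hinv]
    linarith
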